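/- Let k < 1/2 be a real number. Then there is a constant c > 0 such that for all f, g ∈ L²(ℝ) the convolution f*g satisfies ∫_ℝ |(f*g)(ξ)|² ⟨ξ⟩^{2(k−1)} dξ ≤ c ‖f‖²_{L²(ℝ)} ‖g‖²_{L²(ℝ)}. Equivalently (taking f, g to be the Fourier transforms of u, v ∈ L²(ℝ)): ‖uv‖_{H^{k−1}(ℝ)} ≤ c' ‖u‖_{L²(ℝ)} ‖v‖_{L²(ℝ)} for k < 1/2. -/

import Mathlib

open MeasureTheory
open scoped ENNReal NNReal

/-- Japanese bracket `⟨x⟩ = (1 + |x|²)^{1/2}`. -/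
noncomputable def jb (x : ℝ) : ℝ := Real.sqrt (1 + x ^ 2)

theorem stmt10 (k : ℝ) (hk : k < 1/2) :
    ∃ c > (0:ℝ), ∀ f g : ℝ → ℂ, Measurable f → Measurable g →
      MemLp f 2 volume → MemLp g 2 volume →
      (∫⁻ ξ : ℝ, ENNReal.ofReal (‖∫ η : ℝ, f η * g (ξ - η)‖ ^ 2 * jb ξ ^ (2 * (k - 1))))
        ≤ ENNReal.ofReal c * (eLpNorm f 2 volume) ^ 2 * (eLpNorm g 2 volume) ^ 2 := by
  -- the weight is integrable
  have hr : (Module.finrank ℝ ℝ : ℝ) < 2 * (1 - k) := by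
    simp [Module.finrank_self]; linarith
  have hint : Integrable (fun x : ℝ => ((1 : ℝ) + ‖x‖ ^ 2) ^ (-(2 * (1 - k)) / 2)) volume :=
    integrable_rpow_neg_one_add_norm_sq hr
  have hjb : ∀ x : ℝ, jb x ^ (2 * (k - 1)) = ((1 : ℝ) + ‖x‖ ^ 2) ^ (-(2 * (1 - k)) / 2) := by
    intro x
    have h1 : (0:ℝ) ≤ 1 + x ^ 2 := by positivity
    have : jb x = (1 + x ^ 2) ^ (1/2 : ℝ) := by
      rw [jb, Real.sqrt_eq_rpow]
    rw [this, ← Real.rpow_mul h1, Real.norm_eq_abs, sq_abs]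
    ring_nf
  have hJ : (∫⁻ ξ : ℝ, ENNReal.ofReal (jb ξ ^ (2 * (k - 1)))) < ⊤ := by
    simp_rw [hjb]
    exact hint.lintegral_lt_top
  set J : ℝ≥0∞ := ∫⁻ ξ : ℝ, ENNReal.ofReal (jb ξ ^ (2 * (k - 1))) with hJdef
  refine ⟨J.toReal + 1, by positivity, ?_⟩
  intro f g hf hg hf2 hg2
  have hpow : ∀ x : ℝ≥0∞, x ^ (2:ℝ) = x ^ (2:ℕ) := fun x => by
    rw [← ENNReal.rpow_natCast]; norm_num
  set F : ℝ≥0∞ := ∫⁻ a : ℝ, (‖f a‖₊ : ℝ≥0∞) ^ (2:ℕ) with hF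
  set G : ℝ≥0∞ := ∫⁻ a : ℝ, (‖g a‖₊ : ℝ≥0∞) ^ (2:ℕ) with hG
  have hFe : (eLpNorm f 2 volume) ^ 2 = F := by
    rw [eLpNorm_eq_lintegral_rpow_enorm_toReal (by norm_num) (by norm_num)]
    rw [← ENNReal.rpow_natCast _ 2, ← ENNReal.rpow_mul]
    norm_num
    rfl
  have hGe : (eLpNorm g 2 volume) ^ 2 = G := by
    rw [eLpNorm_eq_lintegral_rpow_enorm_toReal (by norm_num) (by norm_num)]
    rw [← ENNReal.rpow_natCast _ 2, ← ENNReal.rpow_mul]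
    norm_num
    rfl
  -- Cauchy-Schwarz pointwise
  have key : ∀ ξ : ℝ, ENNReal.ofReal (‖∫ η : ℝ, f η * g (ξ - η)‖ ^ 2) ≤ F * G := by
    intro ξ
    have h1 : (‖∫ η : ℝ, f η * g (ξ - η)‖₊ : ℝ≥0∞) ≤
        ∫⁻ η : ℝ, ‖f η‖₊ * ‖g (ξ - η)‖₊ := by
      refine (enorm_integral_le_lintegral_enorm _).trans_eq ?_
      simp [nnnorm_mul, ENNReal.coe_mul]
      rfl
    have h2 : (∫⁻ η : ℝ, (‖f η‖₊ : ℝ≥0∞) * ‖g (ξ - η)‖₊) ≤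
        F ^ (1/2 : ℝ) * G ^ (1/2 : ℝ) := by
      have hconj : (2:ℝ).HolderConjugate 2 := Real.HolderConjugate.two_two
      have := ENNReal.lintegral_mul_le_Lp_mul_Lq volume hconj
        (f := fun η => (‖f η‖₊ : ℝ≥0∞)) (g := fun η => (‖g (ξ - η)‖₊ : ℝ≥0∞))
        (hf.enorm.aemeasurable) ((hg.comp (measurable_const.sub measurable_id)).enorm.aemeasurable)
      refine this.trans_eq ?_
      simp_rw [hpow]
      congr 1
      have : (∫⁻ η : ℝ, (‖g (ξ - η)‖₊ : ℝ≥0∞) ^ (2:ℕ)) = ∫⁻ a : ℝ, (‖g a‖₊ : ℝ≥0∞) ^ (2:ℕ) := by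
        exact (Measure.measurePreserving_sub_left volume ξ).lintegral_comp
          (hg.enorm.pow_const _)
      rw [this]
    calc ENNReal.ofReal (‖∫ η : ℝ, f η * g (ξ - η)‖ ^ 2)
        = ((‖∫ η : ℝ, f η * g (ξ - η)‖₊ : ℝ≥0∞)) ^ 2 := by
          rw [ENNReal.ofReal_pow (norm_nonneg _), ofReal_norm, enorm_eq_nnnorm]
      _ ≤ (F ^ (1/2:ℝ) * G ^ (1/2:ℝ)) ^ 2 := by
          exact pow_le_pow_left' (h1.trans h2) 2
      _ = F * G := by
          rw [mul_pow, ← ENNReal.rpow_natCast (F ^ (1/2:ℝ)), ← ENNReal.rpow_natCast (G ^ (1/2:ℝ)),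
            ← ENNReal.rpow_mul, ← ENNReal.rpow_mul]
          norm_num
  calc (∫⁻ ξ : ℝ, ENNReal.ofReal (‖∫ η : ℝ, f η * g (ξ - η)‖ ^ 2 * jb ξ ^ (2 * (k - 1))))
      ≤ ∫⁻ ξ : ℝ, (F * G) * ENNReal.ofReal (jb ξ ^ (2 * (k - 1))) := by
        refine lintegral_mono fun ξ => ?_
        rw [ENNReal.ofReal_mul (by positivity)]
        exact mul_le_mul_left (key ξ) _
    _ = (F * G) * J := by
        have hw : Measurable fun ξ : ℝ => ENNReal.ofReal (jb ξ ^ (2 * (k - 1))) := by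
          simp only [jb]
          fun_prop
        rw [lintegral_const_mul _ hw]
    _ ≤ (F * G) * ENNReal.ofReal (J.toReal + 1) := by
        refine mul_le_mul_right ?_ _
        calc J = ENNReal.ofReal J.toReal := (ENNReal.ofReal_toReal hJ.ne).symm
          _ ≤ ENNReal.ofReal (J.toReal + 1) := ENNReal.ofReal_le_ofReal (by linarith)
    _ = ENNReal.ofReal (J.toReal + 1) * (eLpNorm f 2 volume) ^ 2 * (eLpNorm g 2 volume) ^ 2 := by
        rw [hFe, hGe]; ring
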